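/- arXiv:1210.6259 — 2 statements merged into one kernel-verified Lean document; each statement's English description precedes it below -/
import Mathlib

section
/- Let X be a random point of S with law μ, let p ≥ 0, and let x, y ∈ S be points with λ₂(x) < ∞ and λ₂(y) < ∞. Then E[(1 − K(X,x)p)₊ · (1 − K(X,y)p)₊] ≤ 1 − (λ(x)+λ(y))p + (1/2)(λ₂(x)+λ₂(y))² p², where (t)₊ = max(t,0). -/
open MeasureTheory Filter Set

noncomputable section

/-- The edge probability scaling `pₙ = log n / n`. -/
def pEdge (n : ℕ) : ℝ := Real.log n / n

/-- `λ(x) = ∫ K(x,y) dμ(y)`. -/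
def lamFun {S : Type*} [MeasurableSpace S] (K : S → S → ℝ) (μ : Measure S) (x : S) : ℝ :=
  ∫ y, K x y ∂μ

/-- `λ₂(x) = (∫ K(x,y)² dμ(y))^{1/2}`. -/
def lam2Fun {S : Type*} [MeasurableSpace S] (K : S → S → ℝ) (μ : Measure S) (x : S) : ℝ :=
  Real.sqrt (∫ y, (K x y) ^ 2 ∂μ)

/-- The isolation parameter `Λ = essinf λ`. -/
def isolParam {S : Type*} [MeasurableSpace S] (K : S → S → ℝ) (μ : Measure S) : ℝ :=
  essInf (lamFun K μ) μ

/-- `‖λ₂‖_∞`, the `μ`-essential supremum of `λ₂`. -/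
def lam2Norm {S : Type*} [MeasurableSpace S] (K : S → S → ℝ) (μ : Measure S) : ℝ :=
  essSup (lam2Fun K μ) μ

/-- A kernel is irreducible if there is no measurable `A` with `0 < μ A < 1` and
`K = 0` `(μ ⊗ μ)`-a.e. on `A × Aᶜ`. -/
def IrreducibleKernel {S : Type*} [MeasurableSpace S] (K : S → S → ℝ) (μ : Measure S) : Prop :=
  ¬ ∃ A : Set S, MeasurableSet A ∧ 0 < μ A ∧ μ A < 1 ∧
      ∀ᵐ p ∂(μ.prod μ), p.1 ∈ A → p.2 ∈ Aᶜ → K p.1 p.2 = 0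

/-- The inhomogeneous random graph `G(n,K)` as a deterministic function of the points `x` and
of auxiliary i.i.d. uniforms `u`: the pair `{i,j}` (`i ≠ j`) is an edge iff
`u (min i j) (max i j) < min 1 (K (x i) (x j) * pₙ)`. -/
def graphOf {S : Type*} (K : S → S → ℝ) (n : ℕ) (x : Fin n → S) (u : Fin n → Fin n → ℝ) :
    SimpleGraph (Fin n) where
  Adj i j := i ≠ j ∧ u (min i j) (max i j) < min 1 (K (x (min i j)) (x (max i j)) * pEdge n)
  symm := ⟨by
    rintro i j ⟨hne, hlt⟩
    exact ⟨hne.symm, by rwa [min_comm j i, max_comm j i]⟩⟩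
  loopless := ⟨fun i h => h.1 rfl⟩

/-- The law of the randomness underlying `G(n,K)`: `n` i.i.d. points with law `μ` together with
an independent array of i.i.d. uniforms on `[0,1]`. -/
def graphMeasure {S : Type*} [MeasurableSpace S] (μ : Measure S) (n : ℕ) :
    Measure ((Fin n → S) × (Fin n → Fin n → ℝ)) :=
  (Measure.pi fun _ : Fin n => μ).prod
    (Measure.pi fun _ : Fin n => Measure.pi fun _ : Fin n => volume.restrict (Icc (0:ℝ) 1))

/-- **Pointwise product bound** (equations (2.3)–(2.4)).  For `p ≥ 0` and points `x, y` with
`λ₂(x), λ₂(y) < ∞`,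
`E[(1-K(X,x)p)₊ (1-K(X,y)p)₊] ≤ 1 - (λ(x)+λ(y))p + ½(λ₂(x)+λ₂(y))² p²`. -/
theorem product_positive_part_bound
    {S : Type*} [MetricSpace S] [TopologicalSpace.SeparableSpace S]
    [MeasurableSpace S] [BorelSpace S]
    (μ : Measure S) [IsProbabilityMeasure μ] (K : S → S → ℝ)
    (hKsymm : ∀ x y, K x y = K y x)
    (hKnonneg : ∀ x y, 0 ≤ K x y)
    (hKmeas : Measurable (Function.uncurry K))
    (hKint : Integrable (Function.uncurry K) (μ.prod μ))
    (p : ℝ) (hp : 0 ≤ p) (x y : S)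
    (hx : Integrable (fun z => (K x z) ^ 2) μ)
    (hy : Integrable (fun z => (K y z) ^ 2) μ) :
    ∫ z, max (1 - K z x * p) 0 * max (1 - K z y * p) 0 ∂μ ≤
      1 - (lamFun K μ x + lamFun K μ y) * p
        + (1/2) * (lam2Fun K μ x + lam2Fun K μ y) ^ 2 * p ^ 2 := by
  classical
  set f : S → ℝ := fun z => K x z with hf_def
  set g : S → ℝ := fun z => K y z with hg_def
  have hfmeas : Measurable f := hKmeas.comp (measurable_prodMk_left)
  have hgmeas : Measurable g := hKmeas.comp (measurable_prodMk_left)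
  have hfmeas' : Measurable (fun z => K z x) :=
    hKmeas.comp (measurable_id.prodMk measurable_const)
  have hgmeas' : Measurable (fun z => K z y) :=
    hKmeas.comp (measurable_id.prodMk measurable_const)
  have hfnn : ∀ z, 0 ≤ f z := fun z => hKnonneg x z
  have hgnn : ∀ z, 0 ≤ g z := fun z => hKnonneg y z
  have hfL2 : MemLp f 2 μ := by
    rw [memLp_two_iff_integrable_sq hfmeas.aestronglyMeasurable]
    exact hx
  have hgL2 : MemLp g 2 μ := by
    rw [memLp_two_iff_integrable_sq hgmeas.aestronglyMeasurable]
    exact hy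
  have hfint : Integrable f μ := hfL2.integrable (by norm_num)
  have hgint : Integrable g μ := hgL2.integrable (by norm_num)
  have hadd : Integrable (fun z => f z + g z) μ := hfint.add hgint
  -- integrability of f*g via AM-GM
  have hfg : Integrable (fun z => f z * g z) μ := by
    refine Integrable.mono' ((hx.add hy).div_const 2) ((hfmeas.mul hgmeas).aestronglyMeasurable) ?_
    filter_upwards with z
    rw [Real.norm_eq_abs, abs_of_nonneg (mul_nonneg (hfnn z) (hgnn z))]
    simp only [Pi.add_apply]
    nlinarith [hfnn z, hgnn z, sq_nonneg (f z - g z)]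
  have hfg2 : Integrable (fun z => 2 * (f z * g z)) μ := hfg.const_mul 2
  have hxy2 : Integrable (fun z => K x z ^ 2 + 2 * (f z * g z)) μ := hx.add hfg2
  have hsum2 : Integrable (fun z => (f z + g z) ^ 2) μ := by
    have heq : (fun z => (f z + g z) ^ 2)
        = fun z => (K x z ^ 2 + 2 * (f z * g z)) + K y z ^ 2 := by
      funext z; ring
    rw [heq]
    exact hxy2.add hy
  -- Cauchy–Schwarz
  have hCS : ∫ z, f z * g z ∂μ ≤ lam2Fun K μ x * lam2Fun K μ y := by
    have h2 : Real.HolderConjugate 2 2 := Real.HolderConjugate.two_two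
    have hH := integral_mul_le_Lp_mul_Lq_of_nonneg (μ := μ) h2
      (Filter.Eventually.of_forall hfnn) (Filter.Eventually.of_forall hgnn)
      (by simpa using hfL2) (by simpa using hgL2)
    have hrp : ∀ (h : S → ℝ), (∫ a, h a ^ (2:ℝ) ∂μ) = ∫ a, h a ^ (2:ℕ) ∂μ := by
      intro h
      refine integral_congr_ae (Filter.Eventually.of_forall fun a => ?_)
      show h a ^ (2:ℝ) = h a ^ (2:ℕ)
      rw [show ((2:ℝ)) = ((2:ℕ):ℝ) by norm_num, Real.rpow_natCast]
    rw [hrp f, hrp g] at hH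
    simp only [lam2Fun, Real.sqrt_eq_rpow]
    exact hH
  -- second moment bound
  have hl2x_sq : (lam2Fun K μ x) ^ 2 = ∫ a, (K x a) ^ 2 ∂μ := by
    rw [lam2Fun, Real.sq_sqrt]
    exact integral_nonneg fun a => sq_nonneg _
  have hl2y_sq : (lam2Fun K μ y) ^ 2 = ∫ a, (K y a) ^ 2 ∂μ := by
    rw [lam2Fun, Real.sq_sqrt]
    exact integral_nonneg fun a => sq_nonneg _
  have hmom : ∫ z, (f z + g z) ^ 2 ∂μ ≤ (lam2Fun K μ x + lam2Fun K μ y) ^ 2 := by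
    have hexp : ∫ z, (f z + g z) ^ 2 ∂μ
        = (∫ a, (K x a) ^ 2 ∂μ) + 2 * ∫ z, f z * g z ∂μ + ∫ a, (K y a) ^ 2 ∂μ := by
      have heq : (fun z => (f z + g z) ^ 2)
          = fun z => (K x z ^ 2 + 2 * (f z * g z)) + K y z ^ 2 := by
        funext z; ring
      rw [heq, integral_add hxy2 hy, integral_add hx hfg2, integral_const_mul]
    rw [hexp]
    nlinarith [hl2x_sq, hl2y_sq, hCS]
  -- pointwise bound
  have hpt : ∀ z, max (1 - K z x * p) 0 * max (1 - K z y * p) 0 ≤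
      1 - (f z + g z) * p + (f z + g z) ^ 2 * p ^ 2 / 2 := by
    intro z
    have hxz : K z x = f z := hKsymm z x
    have hyz : K z y = g z := hKsymm z y
    rw [hxz, hyz]
    set a := f z * p with ha_def
    set b := g z * p with hb_def
    have ha : 0 ≤ a := mul_nonneg (hfnn z) hp
    have hb : 0 ≤ b := mul_nonneg (hgnn z) hp
    have key : max (1 - a) 0 * max (1 - b) 0 ≤ 1 - (a + b) + (a + b) ^ 2 / 2 := by
      rcases le_total a 1 with h1 | h1 <;> rcases le_total b 1 with h2 | h2
      · rw [max_eq_left (by linarith : (0:ℝ) ≤ 1 - a),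
            max_eq_left (by linarith : (0:ℝ) ≤ 1 - b)]
        nlinarith
      · rw [max_eq_right (by linarith : 1 - b ≤ (0:ℝ)), mul_zero]
        nlinarith [sq_nonneg (a + b - 1)]
      · rw [max_eq_right (by linarith : 1 - a ≤ (0:ℝ)), zero_mul]
        nlinarith [sq_nonneg (a + b - 1)]
      · rw [max_eq_right (by linarith : 1 - a ≤ (0:ℝ)), zero_mul]
        nlinarith [sq_nonneg (a + b - 1)]
    calc max (1 - a) 0 * max (1 - b) 0 ≤ 1 - (a + b) + (a + b) ^ 2 / 2 := key
    _ = 1 - (f z + g z) * p + (f z + g z) ^ 2 * p ^ 2 / 2 := by rw [ha_def, hb_def]; ring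
  -- integrability of both sides
  have hLHSint : Integrable (fun z => max (1 - K z x * p) 0 * max (1 - K z y * p) 0) μ := by
    refine Integrable.mono' (integrable_const (1:ℝ)) ?_ ?_
    · exact (((measurable_const.sub (hfmeas'.mul_const p)).max measurable_const).mul
        ((measurable_const.sub (hgmeas'.mul_const p)).max measurable_const)).aestronglyMeasurable
    · filter_upwards with z
      have h1 : max (1 - K z x * p) 0 ≤ 1 := by
        have := mul_nonneg (hKnonneg z x) hp
        apply max_le <;> linarith
      have h2 : max (1 - K z y * p) 0 ≤ 1 := by
        have := mul_nonneg (hKnonneg z y) hp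
        apply max_le <;> linarith
      rw [Real.norm_eq_abs, abs_of_nonneg (mul_nonneg (le_max_right _ _) (le_max_right _ _))]
      calc max (1 - K z x * p) 0 * max (1 - K z y * p) 0 ≤ 1 * 1 :=
        mul_le_mul h1 h2 (le_max_right _ _) (by norm_num)
      _ = 1 := by norm_num
  have hI2 : Integrable (fun z => (f z + g z) * p) μ := hadd.mul_const p
  have hI1 : Integrable (fun z => 1 - (f z + g z) * p) μ := (integrable_const 1).sub hI2
  have hI3 : Integrable (fun z => (f z + g z) ^ 2 * p ^ 2 / 2) μ :=
    (hsum2.mul_const (p ^ 2)).div_const 2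
  have hRHSint : Integrable (fun z => 1 - (f z + g z) * p + (f z + g z) ^ 2 * p ^ 2 / 2) μ :=
    hI1.add hI3
  calc ∫ z, max (1 - K z x * p) 0 * max (1 - K z y * p) 0 ∂μ
      ≤ ∫ z, 1 - (f z + g z) * p + (f z + g z) ^ 2 * p ^ 2 / 2 ∂μ :=
        integral_mono hLHSint hRHSint hpt
    _ = 1 - (lamFun K μ x + lamFun K μ y) * p + (∫ z, (f z + g z) ^ 2 ∂μ) * p ^ 2 / 2 := by
        rw [integral_add hI1 hI3, integral_sub (integrable_const 1) hI2,
          integral_const, integral_div, integral_mul_const, integral_mul_const,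
          integral_add hfint hgint]
        simp [lamFun, hf_def, hg_def]
    _ ≤ 1 - (lamFun K μ x + lamFun K μ y) * p
        + (1/2) * (lam2Fun K μ x + lam2Fun K μ y) ^ 2 * p ^ 2 := by
        nlinarith [hmom, sq_nonneg p]
end
end

section
/- For the kernel K on [0,1], for every n ≥ 3 the probability that G(n,K) is disconnected is at least (1 − 2/n)^{n−1}; in particular liminf_{n→∞} P(G(n,K) is disconnected) ≥ e^{−2} > 0, even though Λ = c/2 can be made arbitrarily large by choosing c large. -/
open MeasureTheory Filter Set

noncomputable section

/-- The example kernel of Section 4 on `S = [0,1]`: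
`K(x,y) = (c/x) 1_{[x/2,x]}(y) + (c/y) 1_{[y/2,y]}(x)` for `x, y ∈ (0,1]`, and `K = 0` when
`x = 0` or `y = 0` (note that both clauses below indeed vanish in that case). -/
def Kex (c : ℝ) (x y : ℝ) : ℝ :=
  (if y ∈ Set.Icc (x/2) x then c / x else 0) + (if x ∈ Set.Icc (y/2) y then c / y else 0)

lemma graphMeasure_univ (n : ℕ) :
    graphMeasure (volume.restrict (Set.Icc (0:ℝ) 1)) n Set.univ = 1 := by
  have h0 : (volume.restrict (Set.Icc (0:ℝ) 1)) Set.univ = 1 := by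
    rw [Measure.restrict_apply_univ, Real.volume_Icc]
    norm_num
  have h1 : (Measure.pi fun _ : Fin n => volume.restrict (Set.Icc (0:ℝ) 1)) Set.univ = 1 := by
    rw [Measure.pi_univ]
    simp only [h0, Finset.prod_const_one]
  have h2 : (Measure.pi fun _ : Fin n => Measure.pi fun _ : Fin n =>
      volume.restrict (Set.Icc (0:ℝ) 1)) Set.univ = 1 := by
    rw [Measure.pi_univ]
    simp only [h1, Finset.prod_const_one]
  rw [graphMeasure, ← Set.univ_prod_univ, Measure.prod_prod, h1, h2, mul_one]

lemma graphMeasure_ne_top (n : ℕ) (s : Set ((Fin n → ℝ) × (Fin n → Fin n → ℝ))) :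
    graphMeasure (volume.restrict (Set.Icc (0:ℝ) 1)) n s ≠ ⊤ := by
  refine ne_top_of_le_ne_top ?_ (measure_mono (Set.subset_univ s))
  rw [graphMeasure_univ]
  exact ENNReal.one_ne_top

lemma kex_comm (c x y : ℝ) : Kex c x y = Kex c y x := add_comm _ _

lemma kex_eq_zero {c a b : ℝ} (ha : 0 ≤ a) (h : 2 * a < b) : Kex c a b = 0 := by
  have h1 : b ∉ Set.Icc (a/2) a := fun hm => by
    obtain ⟨_, h2⟩ := hm; nlinarith
  have h2 : a ∉ Set.Icc (b/2) b := fun hm => by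
    obtain ⟨h1', _⟩ := hm; nlinarith
  simp [Kex, h1, h2]

lemma isolated_not_connected (c : ℝ) {n : ℕ} (hn : 3 ≤ n) (x : Fin n → ℝ)
    (u : Fin n → Fin n → ℝ) (i : Fin n) (hxi0 : 0 ≤ x i) (hxi : x i < 1 / n)
    (hxj : ∀ j, j ≠ i → 2 / n < x j) (hu : ∀ j k, 0 ≤ u j k) :
    ¬ (graphOf (Kex c) n x u).Connected := by
  have hn0 : (0:ℝ) < n := by
    have : (3:ℝ) ≤ n := by exact_mod_cast hn
    linarith
  have hK : ∀ k, k ≠ i → Kex c (x i) (x k) = 0 ∧ Kex c (x k) (x i) = 0 := by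
    intro k hk
    have h2 : 2 * x i < x k := by
      have h3 := hxj k hk
      have e : 2 * (1 / (n:ℝ)) = 2 / n := by ring
      nlinarith
    exact ⟨kex_eq_zero hxi0 h2, (kex_comm c (x k) (x i)).trans (kex_eq_zero hxi0 h2)⟩
  have hadj : ∀ k, ¬ (graphOf (Kex c) n x u).Adj i k := by
    rintro k ⟨hne, hlt⟩
    have hk : k ≠ i := fun h => hne h.symm
    have h0 : Kex c (x (min i k)) (x (max i k)) = 0 := by
      rcases le_total i k with h | h
      · rw [min_eq_left h, max_eq_right h]; exact (hK k hk).1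
      · rw [min_eq_right h, max_eq_left h]; exact (hK k hk).2
    rw [h0, zero_mul, min_eq_right (zero_le_one' ℝ)] at hlt
    exact absurd hlt (not_lt.mpr (hu _ _))
  intro hcon
  obtain ⟨j, hj⟩ := Fintype.exists_ne_of_one_lt_card
    (by rw [Fintype.card_fin]; omega) i
  obtain ⟨w⟩ := hcon.preconnected i j
  cases w with
  | nil => exact hj rfl
  | cons h p => exact hadj _ h

lemma part1_bound (c : ℝ) (n : ℕ) (hn : 3 ≤ n) :
    ENNReal.ofReal ((1 - 2 / (n : ℝ)) ^ (n - 1)) ≤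
      graphMeasure (volume.restrict (Set.Icc (0:ℝ) 1)) n
        {ω | ¬ (graphOf (Kex c) n ω.1 ω.2).Connected} := by
  set μ₀ := volume.restrict (Set.Icc (0:ℝ) 1) with hμ₀
  have hn0 : (0:ℝ) < n := by
    have : (3:ℝ) ≤ n := by exact_mod_cast hn
    linarith
  have h1n : 1 / (n:ℝ) ≤ 1 := by rw [div_le_one hn0]; linarith [show (3:ℝ) ≤ n from by exact_mod_cast hn]
  have h2n : 2 / (n:ℝ) ≤ 1 := by rw [div_le_one hn0]; linarith [show (3:ℝ) ≤ n from by exact_mod_cast hn]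
  set B : Fin n → Set (Fin n → ℝ) := fun i =>
    Set.pi Set.univ (fun j => if j = i then Ico (0:ℝ) (1/n) else Ioc ((2:ℝ)/n) 1) with hB
  set C : Set (Fin n → Fin n → ℝ) :=
    Set.pi Set.univ (fun _ => Set.pi Set.univ fun _ => Icc (0:ℝ) 1) with hC
  have hBmeas : ∀ i, MeasurableSet (B i) := fun i =>
    MeasurableSet.univ_pi fun j => by
      by_cases h : j = i
      · simp [h]
      · simp [h]
  have hCmeas : MeasurableSet C :=
    MeasurableSet.univ_pi fun _ => MeasurableSet.univ_pi fun _ => measurableSet_Icc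
  have hsub : (⋃ i, B i ×ˢ C) ⊆
      {ω : (Fin n → ℝ) × (Fin n → Fin n → ℝ) | ¬ (graphOf (Kex c) n ω.1 ω.2).Connected} := by
    rintro ⟨x, u⟩ hmem
    simp only [Set.mem_iUnion, Set.mem_prod] at hmem
    obtain ⟨i, hx, hu⟩ := hmem
    have hxi : x i ∈ Ico (0:ℝ) (1/n) := by
      have := hx i (Set.mem_univ i); simpa using this
    have hxj : ∀ j, j ≠ i → 2 / (n:ℝ) < x j := by
      intro j hj
      have := hx j (Set.mem_univ j)
      simp only [if_neg hj] at this
      exact this.1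
    have hu' : ∀ j k, 0 ≤ u j k := fun j k =>
      ((hu j (Set.mem_univ j)) k (Set.mem_univ k)).1
    exact isolated_not_connected c hn x u i hxi.1 hxi.2 hxj hu'
  have hdisj : Pairwise (Function.onFun Disjoint fun i => B i ×ˢ C) := by
    intro i j hij
    rw [Function.onFun, Set.disjoint_left]
    rintro ⟨x, u⟩ ⟨hxi, _⟩ ⟨hxj, _⟩
    have h1 : x i ∈ Ico (0:ℝ) (1/n) := by
      have := hxi i (Set.mem_univ i); simpa using this
    have h2 : x i ∈ Ioc ((2:ℝ)/n) 1 := by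
      have := hxj i (Set.mem_univ i); simpa [hij] using this
    have : (1:ℝ)/n ≤ 2/n := by gcongr; norm_num
    have := h1.2
    have := h2.1
    linarith
  have hIcc1 : μ₀ (Icc (0:ℝ) 1) = 1 := by
    rw [hμ₀, Measure.restrict_apply measurableSet_Icc, Set.inter_self, Real.volume_Icc]
    norm_num
  have hinner : (Measure.pi fun _ : Fin n => μ₀)
      (Set.pi Set.univ fun _ : Fin n => Icc (0:ℝ) 1) = 1 := by
    rw [Measure.pi_pi]
    simp only [hIcc1, Finset.prod_const_one]
  have hC1 : (Measure.pi fun _ : Fin n => Measure.pi fun _ : Fin n => μ₀) C = 1 := by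
    rw [hC, Measure.pi_pi]
    simp only [hinner, Finset.prod_const_one]
  have hsub1 : Ico (0:ℝ) (1/n) ⊆ Icc (0:ℝ) 1 := fun y hy => ⟨hy.1, hy.2.le.trans h1n⟩
  have e1 : μ₀ (Ico (0:ℝ) (1/n)) = ENNReal.ofReal (1/n) := by
    rw [hμ₀, Measure.restrict_apply measurableSet_Ico,
      Set.inter_eq_left.mpr hsub1, Real.volume_Ico, sub_zero]
  have h20 : (0:ℝ) ≤ 2/n := by positivity
  have hsub2 : Ioc ((2:ℝ)/n) 1 ⊆ Icc (0:ℝ) 1 := fun y hy => ⟨h20.trans hy.1.le, hy.2⟩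
  have e2 : μ₀ (Ioc ((2:ℝ)/n) 1) = ENNReal.ofReal (1 - 2/n) := by
    rw [hμ₀, Measure.restrict_apply measurableSet_Ioc,
      Set.inter_eq_left.mpr hsub2, Real.volume_Ioc]
  have hBval : ∀ i, (Measure.pi fun _ : Fin n => μ₀) (B i) =
      ENNReal.ofReal (1/n) * ENNReal.ofReal (1 - 2/n) ^ (n - 1) := by
    intro i
    rw [hB, Measure.pi_pi]
    calc (∏ j : Fin n, μ₀ (if j = i then Ico (0:ℝ) (1/n) else Ioc ((2:ℝ)/n) 1))
        = μ₀ (Ico (0:ℝ) (1/n)) *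
            ∏ j ∈ Finset.univ.erase i, μ₀ (if j = i then Ico (0:ℝ) (1/n) else Ioc ((2:ℝ)/n) 1) := by
          rw [← Finset.mul_prod_erase Finset.univ
            (fun j => μ₀ (if j = i then Ico (0:ℝ) (1/n) else Ioc ((2:ℝ)/n) 1))
            (Finset.mem_univ i), if_pos rfl]
      _ = ENNReal.ofReal (1/n) * ENNReal.ofReal (1 - 2/n) ^ (n - 1) := by
          rw [e1, Finset.prod_congr rfl (fun j hj => by
            rw [if_neg (Finset.ne_of_mem_erase hj), e2]),
            Finset.prod_const, Finset.card_erase_of_mem (Finset.mem_univ i),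
            Finset.card_univ, Fintype.card_fin]
  have hmeasU : graphMeasure μ₀ n (⋃ i, B i ×ˢ C) =
      (n : ENNReal) * (ENNReal.ofReal (1/n) * ENNReal.ofReal (1 - 2/n) ^ (n - 1)) := by
    rw [graphMeasure, measure_iUnion hdisj (fun i => (hBmeas i).prod hCmeas)]
    simp only [Measure.prod_prod, hBval, hC1, mul_one]
    rw [tsum_fintype, Finset.sum_const, Finset.card_univ, Fintype.card_fin, nsmul_eq_mul]
    rw [← hμ₀, hC1, mul_one]
  have hval : (n : ENNReal) * (ENNReal.ofReal (1/n) * ENNReal.ofReal (1 - 2/n) ^ (n - 1)) =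
      ENNReal.ofReal ((1 - 2 / (n:ℝ)) ^ (n - 1)) := by
    rw [← mul_assoc, ← ENNReal.ofReal_natCast n, ← ENNReal.ofReal_mul hn0.le,
      mul_one_div_cancel (ne_of_gt hn0), ENNReal.ofReal_one, one_mul,
      ← ENNReal.ofReal_pow (by linarith : (0:ℝ) ≤ 1 - 2/n)]
  calc ENNReal.ofReal ((1 - 2 / (n:ℝ)) ^ (n - 1))
      = graphMeasure μ₀ n (⋃ i, B i ×ˢ C) := by rw [hmeasU, hval]
    _ ≤ _ := measure_mono hsub

/-- **The example kernel stays disconnected with positive probability** (Section 4):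
for all `n ≥ 3`, `P(G(n,K) is disconnected) ≥ (1 - 2/n)^{n-1}`, hence
`liminf_n P(G(n,K) is disconnected) ≥ e⁻² > 0` — even though `Λ = c/2` can be made
arbitrarily large by taking `c` large (the statement holds for every `c > 0`). -/
theorem example_kernel_disconnected (c : ℝ) (hc : 0 < c) :
    (∀ n : ℕ, 3 ≤ n →
      ENNReal.ofReal ((1 - 2 / (n : ℝ)) ^ (n - 1)) ≤
        graphMeasure (volume.restrict (Set.Icc (0:ℝ) 1)) n
          {ω | ¬ (graphOf (Kex c) n ω.1 ω.2).Connected}) ∧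
    Real.exp (-2) ≤
      liminf (fun n : ℕ =>
        (graphMeasure (volume.restrict (Set.Icc (0:ℝ) 1)) n
          {ω | ¬ (graphOf (Kex c) n ω.1 ω.2).Connected}).toReal) atTop ∧
    0 < Real.exp (-2) := by
  refine ⟨part1_bound c, ?_, Real.exp_pos _⟩
  have hg : Tendsto (fun n : ℕ => (1 - 2/(n:ℝ)) ^ (n - 1)) atTop (nhds (Real.exp (-2))) := by
    have h1 : Tendsto (fun n : ℕ => (1 + (-2)/(n:ℝ)) ^ n) atTop (nhds (Real.exp (-2))) :=
      Real.tendsto_one_add_div_pow_exp (-2)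
    have h2 : Tendsto (fun n : ℕ => (1 - 2/(n:ℝ))) atTop (nhds 1) := by
      have h3 := tendsto_const_div_atTop_nhds_zero_nat (2:ℝ)
      have h4 := Tendsto.sub
        (tendsto_const_nhds : Tendsto (fun _ : ℕ => (1:ℝ)) atTop (nhds 1)) h3
      simpa using h4
    have h3 := h1.div h2 one_ne_zero
    rw [div_one] at h3
    apply h3.congr'
    filter_upwards [eventually_ge_atTop 3] with n hn
    have hn0 : (0:ℝ) < n := by
      have : (3:ℝ) ≤ n := by exact_mod_cast hn
      linarith
    have hne : (1:ℝ) - 2/n ≠ 0 := by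
      have : 2/(n:ℝ) ≤ 2/3 := by
        gcongr
        exact_mod_cast hn
      intro h; rw [sub_eq_zero] at h; rw [← h] at this; norm_num at this
    have epow : (1 - 2/(n:ℝ)) ^ n = (1 - 2/(n:ℝ)) ^ (n - 1) * (1 - 2/(n:ℝ)) := by
      rw [← pow_succ]
      congr 1
      omega
    simp only [Pi.div_apply]
    rw [show (1:ℝ) + (-2)/n = 1 - 2/n by ring, epow, mul_div_cancel_right₀ _ hne]
  have hle : ∀ᶠ n : ℕ in atTop, (1 - 2/(n:ℝ)) ^ (n - 1) ≤
      (graphMeasure (volume.restrict (Set.Icc (0:ℝ) 1)) n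
        {ω | ¬ (graphOf (Kex c) n ω.1 ω.2).Connected}).toReal := by
    filter_upwards [eventually_ge_atTop 3] with n hn
    exact (ENNReal.ofReal_le_iff_le_toReal (graphMeasure_ne_top n _)).mp (part1_bound c n hn)
  rw [← hg.liminf_eq]
  refine liminf_le_liminf hle hg.isBoundedUnder_ge
    (Filter.IsBoundedUnder.isCoboundedUnder_ge (isBoundedUnder_of ⟨1, fun n => ?_⟩))
  refine ENNReal.toReal_le_of_le_ofReal zero_le_one ?_
  rw [ENNReal.ofReal_one, ← graphMeasure_univ n]
  exact measure_mono (Set.subset_univ _)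
end
end
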